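/- arXiv:1705.10216 — 7 statements merged into one kernel-verified Lean document; each statement's English description precedes it below -/
import Mathlib

section
/- Let I_x and I_y be closed bounded intervals in ℝ, let 0 ≤ μ_h < ∞ and 0 ≤ μ_v < ∞ with μ_v·μ_h < 1. Let h : I_x → I_y satisfy |h(x₁) − h(x₂)| ≤ μ_h·|x₁ − x₂| for all x₁, x₂ ∈ I_x, and let v : I_y → I_x satisfy |v(y₁) − v(y₂)| ≤ μ_v·|y₁ − y₂| for all y₁, y₂ ∈ I_y. Then there exists exactly one point (x, y) ∈ I_x × I_y such that y = h(x) and x = v(y); that is, the μ_h-horizontal curve given by the graph of h and the μ_v-vertical curve given by the graph of v intersect in a unique point. -/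
/-- A `μₕ`-horizontal curve (graph of `h` over `I_x = [a,b]`, lying in `I_x × I_y`)
and a `μᵥ`-vertical curve (graph of `v` over `I_y = [c,d]`, lying in `I_x × I_y`)
with `μᵥ * μₕ < 1` intersect in exactly one point. -/
theorem horizontal_vertical_curve_unique_intersection
    (a b c d : ℝ) (hab : a ≤ b) (hcd : c ≤ d)
    (μh μv : ℝ) (hμh : 0 ≤ μh) (hμv : 0 ≤ μv) (hμ : μv * μh < 1)
    (h v : ℝ → ℝ)
    (hmaps : ∀ x ∈ Set.Icc a b, h x ∈ Set.Icc c d)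
    (vmaps : ∀ y ∈ Set.Icc c d, v y ∈ Set.Icc a b)
    (hlip : ∀ x₁ ∈ Set.Icc a b, ∀ x₂ ∈ Set.Icc a b, |h x₁ - h x₂| ≤ μh * |x₁ - x₂|)
    (vlip : ∀ y₁ ∈ Set.Icc c d, ∀ y₂ ∈ Set.Icc c d, |v y₁ - v y₂| ≤ μv * |y₁ - y₂|) :
    ∃! p : ℝ × ℝ, p.1 ∈ Set.Icc a b ∧ p.2 ∈ Set.Icc c d ∧ p.2 = h p.1 ∧ p.1 = v p.2 := by
  set I := Set.Icc a b
  have hne : Nonempty I := ⟨⟨a, le_refl a, hab⟩⟩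
  have hcomp : CompleteSpace I := IsClosed.completeSpace_coe (hs := isClosed_Icc)
  set f : I → I := fun x => ⟨v (h x.1), vmaps _ (hmaps _ x.2)⟩ with hf
  have key : ∀ x₁ x₂ : I, dist (f x₁) (f x₂) ≤ (μv * μh) * dist x₁ x₂ := by
    intro x₁ x₂
    have h1 : |v (h x₁.1) - v (h x₂.1)| ≤ μv * |h x₁.1 - h x₂.1| :=
      vlip _ (hmaps _ x₁.2) _ (hmaps _ x₂.2)
    have h2 : |h x₁.1 - h x₂.1| ≤ μh * |x₁.1 - x₂.1| := hlip _ x₁.2 _ x₂.2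
    calc dist (f x₁) (f x₂) = |v (h x₁.1) - v (h x₂.1)| := by
          simp [hf, Subtype.dist_eq, Real.dist_eq]
      _ ≤ μv * |h x₁.1 - h x₂.1| := h1
      _ ≤ μv * (μh * |x₁.1 - x₂.1|) := by
          exact mul_le_mul_of_nonneg_left h2 hμv
      _ = (μv * μh) * dist x₁ x₂ := by
          rw [Subtype.dist_eq, Real.dist_eq]; ring
  have hK : ContractingWith ⟨μv * μh, mul_nonneg hμv hμh⟩ f := by
    constructor
    · exact_mod_cast hμ
    · exact LipschitzWith.of_dist_le_mul key
  let x := ContractingWith.fixedPoint f hK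
  have hxfix : f x = x := hK.fixedPoint_isFixedPt
  refine ⟨(x.1, h x.1), ⟨x.2, hmaps _ x.2, rfl, by
    have := congrArg Subtype.val hxfix; simpa [hf] using this.symm⟩, ?_⟩
  rintro ⟨p1, p2⟩ ⟨hp1, hp2, hpy, hpx⟩
  have hpfix : f ⟨p1, hp1⟩ = ⟨p1, hp1⟩ := by
    apply Subtype.ext
    simp only [hf]
    rw [← hpy, ← hpx]
  have : (⟨p1, hp1⟩ : I) = x := hK.fixedPoint_unique hpfix
  have hp1x : p1 = x.1 := congrArg Subtype.val this
  simp only [Prod.mk.injEq]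
  exact ⟨hp1x, by simp only [] at hpy; rw [hpy, hp1x]⟩
end

section
/- Let I_x be a closed bounded interval in ℝ and 0 ≤ μ_h < ∞. For each k ≥ 1 let h₁ᵏ, h₂ᵏ : I_x → ℝ be functions, each satisfying the Lipschitz condition with constant μ_h, with h₁ᵏ(x) ≤ h₂ᵏ(x) for all x ∈ I_x, and set H_k = {(x, y) ∈ ℝ² : h₁ᵏ(x) ≤ y ≤ h₂ᵏ(x), x ∈ I_x}. Assume the strips are nested, H₁ ⊇ H₂ ⊇ ⋯ ⊇ H_k ⊇ ⋯, and that the widths d(H_k) = max_{x ∈ I_x} |h₂ᵏ(x) − h₁ᵏ(x)| tend to 0 as k → ∞. Then the intersection ⋂_{k=1}^{∞} H_k is a μ_h-horizontal curve; that is, there exists a function h_∞ : I_x → ℝ with |h_∞(x₁) − h_∞(x₂)| ≤ μ_h·|x₁ − x₂| for all x₁, x₂ ∈ I_x such that ⋂_{k=1}^{∞} H_k = {(x, h_∞(x)) : x ∈ I_x}. -/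
/-- A nested sequence of `μₕ`-horizontal strips whose widths tend to zero intersects
in a `μₕ`-horizontal curve. -/
theorem nested_horizontal_strips_intersect_in_horizontal_curve
    (a b : ℝ) (hab : a ≤ b) (μh : ℝ) (hμh : 0 ≤ μh)
    (h₁ h₂ : ℕ → ℝ → ℝ)
    (hlip₁ : ∀ k, ∀ x₁ ∈ Set.Icc a b, ∀ x₂ ∈ Set.Icc a b,
      |h₁ k x₁ - h₁ k x₂| ≤ μh * |x₁ - x₂|)
    (hlip₂ : ∀ k, ∀ x₁ ∈ Set.Icc a b, ∀ x₂ ∈ Set.Icc a b,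
      |h₂ k x₁ - h₂ k x₂| ≤ μh * |x₁ - x₂|)
    (hle : ∀ k, ∀ x ∈ Set.Icc a b, h₁ k x ≤ h₂ k x)
    (H : ℕ → Set (ℝ × ℝ))
    (hH : ∀ k, H k = {p : ℝ × ℝ | p.1 ∈ Set.Icc a b ∧ p.2 ∈ Set.Icc (h₁ k p.1) (h₂ k p.1)})
    (hnested : ∀ k, H (k + 1) ⊆ H k)
    (hwidth : Filter.Tendsto (fun k => ⨆ x ∈ Set.Icc a b, |h₂ k x - h₁ k x|)
      Filter.atTop (nhds 0)) :
    ∃ hInf : ℝ → ℝ,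
      (∀ x₁ ∈ Set.Icc a b, ∀ x₂ ∈ Set.Icc a b, |hInf x₁ - hInf x₂| ≤ μh * |x₁ - x₂|) ∧
      (⋂ k, H k) = {p : ℝ × ℝ | p.1 ∈ Set.Icc a b ∧ p.2 = hInf p.1} := by
  -- membership reformulation
  have hmem : ∀ k (p : ℝ × ℝ), p ∈ H k ↔
      p.1 ∈ Set.Icc a b ∧ h₁ k p.1 ≤ p.2 ∧ p.2 ≤ h₂ k p.1 := by
    intro k p
    rw [hH k]
    simp [Set.mem_Icc, and_assoc]
  -- monotonicity in k for each fixed x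
  have mono1 : ∀ x ∈ Set.Icc a b, Monotone (fun k => h₁ k x) := by
    intro x hx
    apply monotone_nat_of_le_succ
    intro k
    have hp : ((x, h₁ (k + 1) x) : ℝ × ℝ) ∈ H (k + 1) := by
      rw [hmem]
      exact ⟨hx, le_refl _, hle (k + 1) x hx⟩
    have := (hmem k _).1 (hnested k hp)
    exact this.2.1
  have anti2 : ∀ x ∈ Set.Icc a b, Antitone (fun k => h₂ k x) := by
    intro x hx
    apply antitone_nat_of_succ_le
    intro k
    have hp : ((x, h₂ (k + 1) x) : ℝ × ℝ) ∈ H (k + 1) := by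
      rw [hmem]
      exact ⟨hx, hle (k + 1) x hx, le_refl _⟩
    have := (hmem k _).1 (hnested k hp)
    exact this.2.2
  have cross : ∀ x ∈ Set.Icc a b, ∀ j k, h₁ j x ≤ h₂ k x := by
    intro x hx j k
    rcases le_total j k with hjk | hjk
    · exact le_trans (mono1 x hx hjk) (hle k x hx)
    · exact le_trans (hle j x hx) (anti2 x hx hjk)
  have bdd : ∀ x ∈ Set.Icc a b, BddAbove (Set.range fun k => h₁ k x) := by
    intro x hx
    exact ⟨h₂ 0 x, by rintro y ⟨k, rfl⟩; exact cross x hx k 0⟩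
  set hInf : ℝ → ℝ := fun x => ⨆ k, h₁ k x with hInfdef
  have t1 : ∀ x ∈ Set.Icc a b,
      Filter.Tendsto (fun k => h₁ k x) Filter.atTop (nhds (hInf x)) := by
    intro x hx
    exact tendsto_atTop_ciSup (mono1 x hx) (bdd x hx)
  -- bounds between h₁ k x, hInf x, h₂ k x
  have hlb : ∀ x ∈ Set.Icc a b, ∀ k, h₁ k x ≤ hInf x := by
    intro x hx k
    exact le_ciSup (bdd x hx) k
  have hub : ∀ x ∈ Set.Icc a b, ∀ k, hInf x ≤ h₂ k x := by
    intro x hx k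
    exact ciSup_le fun j => cross x hx j k
  -- width at each point tends to 0
  have tdiff : ∀ x ∈ Set.Icc a b,
      Filter.Tendsto (fun k => h₂ k x - h₁ k x) Filter.atTop (nhds 0) := by
    intro x hx
    apply squeeze_zero (fun k => sub_nonneg.2 (hle k x hx)) _ hwidth
    intro k
    -- show h₂ k x - h₁ k x ≤ ⨆ y ∈ Icc a b, |h₂ k y - h₁ k y|
    set g : ℝ → ℝ := fun y => ⨆ _ : y ∈ Set.Icc a b, |h₂ k y - h₁ k y| with hg
    have hBge : ∀ y ∈ Set.Icc a b, |h₂ k y - h₁ k y| ≤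
        2 * (μh * (b - a)) + |h₂ k a - h₁ k a| := by
      intro y hy
      have ha : (a : ℝ) ∈ Set.Icc a b := ⟨le_refl a, hab⟩
      have e1 := hlip₁ k y hy a ha
      have e2 := hlip₂ k y hy a ha
      have hya : |y - a| ≤ b - a := by
        rw [abs_of_nonneg (sub_nonneg.2 hy.1)]
        linarith [hy.2]
      have : |h₂ k y - h₁ k y| ≤ |h₂ k y - h₂ k a| + |h₂ k a - h₁ k a| + |h₁ k a - h₁ k y| := by
        have := abs_sub_le (h₂ k y) (h₂ k a) (h₁ k y)
        have h2 := abs_sub_le (h₂ k a) (h₁ k a) (h₁ k y)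
        linarith
      have e1' : |h₁ k a - h₁ k y| ≤ μh * (b - a) := by
        rw [abs_sub_comm]
        exact e1.trans (by nlinarith)
      have e2' : |h₂ k y - h₂ k a| ≤ μh * (b - a) := e2.trans (by nlinarith)
      linarith
    have hBnonneg : (0 : ℝ) ≤ 2 * (μh * (b - a)) + |h₂ k a - h₁ k a| := by
      have := abs_nonneg (h₂ k a - h₁ k a)
      nlinarith
    have hbddg : BddAbove (Set.range g) := by
      refine ⟨2 * (μh * (b - a)) + |h₂ k a - h₁ k a|, ?_⟩
      rintro z ⟨y, rfl⟩
      by_cases hy : y ∈ Set.Icc a b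
      · rw [hg]
        simp only
        rw [ciSup_pos hy]
        exact hBge y hy
      · rw [hg]
        simp only
        haveI : IsEmpty (y ∈ Set.Icc a b) := ⟨hy⟩
        rw [Real.iSup_of_isEmpty]
        exact hBnonneg
    have hx' : g x = |h₂ k x - h₁ k x| := by
      rw [hg]; simp only; rw [ciSup_pos hx]
    calc h₂ k x - h₁ k x ≤ |h₂ k x - h₁ k x| := le_abs_self _
      _ = g x := hx'.symm
      _ ≤ ⨆ y, g y := le_ciSup hbddg x
  have t2 : ∀ x ∈ Set.Icc a b,
      Filter.Tendsto (fun k => h₂ k x) Filter.atTop (nhds (hInf x)) := by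
    intro x hx
    have := (t1 x hx).add (tdiff x hx)
    simpa using this
  refine ⟨hInf, ?_, ?_⟩
  · intro x₁ hx₁ x₂ hx₂
    have tt : Filter.Tendsto (fun k => |h₁ k x₁ - h₁ k x₂|) Filter.atTop
        (nhds |hInf x₁ - hInf x₂|) := ((t1 x₁ hx₁).sub (t1 x₂ hx₂)).abs
    exact le_of_tendsto tt (Filter.Eventually.of_forall fun k => hlip₁ k x₁ hx₁ x₂ hx₂)
  · ext p
    simp only [Set.mem_iInter, Set.mem_setOf_eq]
    constructor
    · intro hp
      have h0 := (hmem 0 p).1 (hp 0)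
      have hx : p.1 ∈ Set.Icc a b := h0.1
      refine ⟨hx, ?_⟩
      have hge : hInf p.1 ≤ p.2 :=
        le_of_tendsto (t1 p.1 hx)
          (Filter.Eventually.of_forall fun k => ((hmem k p).1 (hp k)).2.1)
      have hle' : p.2 ≤ hInf p.1 :=
        ge_of_tendsto (t2 p.1 hx)
          (Filter.Eventually.of_forall fun k => ((hmem k p).1 (hp k)).2.2)
      linarith
    · rintro ⟨hx, hy⟩ k
      rw [hmem]
      exact ⟨hx, hy ▸ hlb p.1 hx k, hy ▸ hub p.1 hx k⟩
end

section
/- Let μ_v ≥ 0 and let t ↦ (x(t), y(t)) be a continuously differentiable curve defined on a closed interval [a, b] ⊂ ℝ such that for every t ∈ [a, b] the tangent vector (x′(t), y′(t)) is nonzero and satisfies |x′(t)| ≤ μ_v·|y′(t)|. Then y′(t) does not change sign on [a, b], and for every pair of points t₁, t₂ ∈ [a, b] one has |x(t₁) − x(t₂)| ≤ μ_v·|y(t₁) − y(t₂)|. -/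
lemma sector_aux (μv : ℝ) (hμv : 0 ≤ μv) (a b : ℝ)
    (x y x' y' : ℝ → ℝ)
    (hx : ∀ t ∈ Set.Icc a b, HasDerivWithinAt x (x' t) (Set.Icc a b) t)
    (hy : ∀ t ∈ Set.Icc a b, HasDerivWithinAt y (y' t) (Set.Icc a b) t)
    (hy'pos : ∀ t ∈ Set.Icc a b, 0 < y' t)
    (hsec : ∀ t ∈ Set.Icc a b, |x' t| ≤ μv * y' t) :
    ∀ t₁ ∈ Set.Icc a b, ∀ t₂ ∈ Set.Icc a b, t₁ ≤ t₂ →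
      |x t₁ - x t₂| ≤ μv * |y t₁ - y t₂| := by
  intro t₁ ht₁ t₂ ht₂ h12
  have hxc : ContinuousOn x (Set.Icc a b) := fun t ht => (hx t ht).continuousWithinAt
  have hyc : ContinuousOn y (Set.Icc a b) := fun t ht => (hy t ht).continuousWithinAt
  have hmono : ∀ (g g' : ℝ → ℝ), (∀ t ∈ Set.Icc a b, HasDerivWithinAt g (g' t) (Set.Icc a b) t) →
      (∀ t ∈ Set.Icc a b, 0 ≤ g' t) → MonotoneOn g (Set.Icc a b) := by
    intro g g' hg hg0
    refine monotoneOn_of_hasDerivWithinAt_nonneg (convex_Icc a b)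
      (fun t ht => (hg t ht).continuousWithinAt)
      (fun t ht => ((hg t (interior_subset ht)).mono interior_subset))
      (fun t ht => hg0 t (interior_subset ht))
  have hymono : MonotoneOn y (Set.Icc a b) :=
    hmono y y' hy (fun t ht => (hy'pos t ht).le)
  have hg : MonotoneOn (fun t => μv * y t - x t) (Set.Icc a b) := by
    refine hmono _ (fun t => μv * y' t - x' t)
      (fun t ht => ((hy t ht).const_mul μv).sub (hx t ht)) ?_
    intro t ht
    have := (abs_le.mp (hsec t ht)).2
    show 0 ≤ μv * y' t - x' t
    linarith
  have hh : MonotoneOn (fun t => μv * y t + x t) (Set.Icc a b) := by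
    refine hmono _ (fun t => μv * y' t + x' t)
      (fun t ht => ((hy t ht).const_mul μv).add (hx t ht)) ?_
    intro t ht
    have := (abs_le.mp (hsec t ht)).1
    show 0 ≤ μv * y' t + x' t
    linarith
  have h1 := hg ht₁ ht₂ h12
  have h2 := hh ht₁ ht₂ h12
  have hy12 : y t₁ ≤ y t₂ := hymono ht₁ ht₂ h12
  have : |y t₁ - y t₂| = y t₂ - y t₁ := by rw [abs_sub_comm, abs_of_nonneg (by linarith)]
  rw [this]
  rw [abs_sub_le_iff]
  constructor <;> simp only at h1 h2 <;> nlinarith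

/-- A C¹ curve on `[a,b]` with nonvanishing tangent vectors lying in the stable sector
`|ξ| ≤ μᵥ|η|` has `y'` of constant sign, and satisfies the Lipschitz estimate
`|x(t₁) − x(t₂)| ≤ μᵥ |y(t₁) − y(t₂)|`. -/
theorem sector_curve_is_vertical_curve
    (μv : ℝ) (hμv : 0 ≤ μv) (a b : ℝ) (hab : a ≤ b)
    (x y x' y' : ℝ → ℝ)
    (hx : ∀ t ∈ Set.Icc a b, HasDerivWithinAt x (x' t) (Set.Icc a b) t)
    (hy : ∀ t ∈ Set.Icc a b, HasDerivWithinAt y (y' t) (Set.Icc a b) t)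
    (hx' : ContinuousOn x' (Set.Icc a b))
    (hy' : ContinuousOn y' (Set.Icc a b))
    (hne : ∀ t ∈ Set.Icc a b, (x' t, y' t) ≠ (0, 0))
    (hsector : ∀ t ∈ Set.Icc a b, |x' t| ≤ μv * |y' t|) :
    ((∀ t ∈ Set.Icc a b, 0 < y' t) ∨ (∀ t ∈ Set.Icc a b, y' t < 0)) ∧
      (∀ t₁ ∈ Set.Icc a b, ∀ t₂ ∈ Set.Icc a b,
        |x t₁ - x t₂| ≤ μv * |y t₁ - y t₂|) := by
  have hy'ne : ∀ t ∈ Set.Icc a b, y' t ≠ 0 := by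
    intro t ht h0
    have hs := hsector t ht
    rw [h0] at hs
    simp at hs
    exact hne t ht (by rw [hs, h0])
  -- no sign change
  have hsign : (∀ t ∈ Set.Icc a b, 0 < y' t) ∨ (∀ t ∈ Set.Icc a b, y' t < 0) := by
    by_cases hpos : ∀ t ∈ Set.Icc a b, 0 < y' t
    · exact Or.inl hpos
    · push_neg at hpos
      obtain ⟨t₀, ht₀, ht₀le⟩ := hpos
      have ht₀neg : y' t₀ < 0 := lt_of_le_of_ne ht₀le (hy'ne t₀ ht₀)
      refine Or.inr fun t ht => ?_
      by_contra hc
      push_neg at hc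
      have hcpos : 0 < y' t := lt_of_le_of_ne hc (Ne.symm (hy'ne t ht))
      have hsub : Set.uIcc t₀ t ⊆ Set.Icc a b := Set.uIcc_subset_Icc ht₀ ht
      have : (0 : ℝ) ∈ Set.uIcc (y' t₀) (y' t) := Set.mem_uIcc.mpr (Or.inl ⟨ht₀neg.le, hcpos.le⟩)
      obtain ⟨c, hc', hc0⟩ := intermediate_value_uIcc (hy'.mono hsub) this
      exact hy'ne c (hsub hc') hc0
  refine ⟨hsign, ?_⟩
  have key : ∀ t₁ ∈ Set.Icc a b, ∀ t₂ ∈ Set.Icc a b, t₁ ≤ t₂ →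
      |x t₁ - x t₂| ≤ μv * |y t₁ - y t₂| := by
    rcases hsign with hpos | hneg
    · exact sector_aux μv hμv a b x y x' y' hx hy hpos
        (fun t ht => by rw [← abs_of_pos (hpos t ht)]; exact hsector t ht)
    · intro t₁ ht₁ t₂ ht₂ h12
      have := sector_aux μv hμv a b x (fun t => -y t) x' (fun t => -y' t) hx
        (fun t ht => (hy t ht).neg)
        (fun t ht => by simpa using (hneg t ht))
        (fun t ht => by
          have := hsector t ht
          rwa [abs_of_neg (hneg t ht)] at this) t₁ ht₁ t₂ ht₂ h12
      have heq : |(fun t => -y t) t₁ - (fun t => -y t) t₂| = |y t₁ - y t₂| := by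
        simp only; rw [abs_sub_comm]; ring_nf
      rwa [heq] at this
  intro t₁ ht₁ t₂ ht₂
  rcases le_total t₁ t₂ with h | h
  · exact key t₁ ht₁ t₂ ht₂ h
  · rw [abs_sub_comm (x t₁), abs_sub_comm (y t₁)]
    exact key t₂ ht₂ t₁ ht₁ h
end

section
/- Let μ_v > 0 and let y₀, ξ, η be real numbers such that |y₀| ≥ (1/2)·(μ_v + 1/μ_v) and |ξ| ≤ μ_v·|η|. Then |η| ≤ μ_v·|ξ + 2·y₀·η|. -/
/-- The Jacobian of the inverse Hénon map sends the stable sector into the stable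
sector when `|y₀| ≥ (μᵥ + 1/μᵥ)/2`. -/
theorem stable_sector_invariance
    (μv : ℝ) (hμv : 0 < μv) (y₀ ξ η : ℝ)
    (hy₀ : (1 / 2) * (μv + 1 / μv) ≤ |y₀|)
    (hsector : |ξ| ≤ μv * |η|) :
    |η| ≤ μv * |ξ + 2 * y₀ * η| := by
  have h1 : |2 * y₀ * η| - |ξ| ≤ |ξ + 2 * y₀ * η| := by
    have := abs_sub_abs_le_abs_sub (2 * y₀ * η) (-ξ)
    simp at this
    calc |2 * y₀ * η| - |ξ| ≤ |2 * y₀ * η + ξ| := by simpa [abs_neg] using this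
      _ = |ξ + 2 * y₀ * η| := by ring_nf
  have h2 : (μv + 1 / μv) * |η| ≤ |2 * y₀ * η| := by
    rw [abs_mul, abs_mul]
    have : μv + 1 / μv ≤ |2| * |y₀| := by
      rw [abs_two]; linarith
    exact mul_le_mul_of_nonneg_right (by nlinarith [abs_nonneg y₀]) (abs_nonneg η)
  have h3 : (1 / μv) * |η| ≤ |ξ + 2 * y₀ * η| := by nlinarith
  have := mul_le_mul_of_nonneg_left h3 hμv.le
  rw [← mul_assoc, mul_one_div, div_self hμv.ne', one_mul] at this
  linarith
end

section
/- Let μ_h > 0 and let x₀, ξ, η be real numbers such that |x₀| ≥ (1/2)·(μ_h + 1/μ_h) and |η| ≤ μ_h·|ξ|. Then |ξ| ≤ μ_h·|2·x₀·ξ + η|. -/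
/-- The Jacobian of the Hénon map sends the unstable sector into the unstable
sector when `|x₀| ≥ (μₕ + 1/μₕ)/2`. -/
theorem unstable_sector_invariance
    (μh : ℝ) (hμh : 0 < μh) (x₀ ξ η : ℝ)
    (hx₀ : (1 / 2) * (μh + 1 / μh) ≤ |x₀|)
    (hsector : |η| ≤ μh * |ξ|) :
    |ξ| ≤ μh * |2 * x₀ * ξ + η| := by
  have key : (1 / μh) * |ξ| ≤ |2 * x₀ * ξ + η| := by
    have h1 : |2 * x₀ * ξ| - |η| ≤ |2 * x₀ * ξ + η| := by
      have := abs_sub_abs_le_abs_sub (2 * x₀ * ξ) (-η)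
      simpa [sub_neg_eq_add] using this
    have h2 : |2 * x₀ * ξ| = 2 * |x₀| * |ξ| := by
      rw [abs_mul, abs_mul]; norm_num
    have h3 : (μh + 1 / μh) * |ξ| ≤ 2 * |x₀| * |ξ| := by
      have := mul_le_mul_of_nonneg_right hx₀ (abs_nonneg ξ)
      nlinarith [abs_nonneg ξ]
    nlinarith [abs_nonneg ξ]
  have := mul_le_mul_of_nonneg_left key (le_of_lt hμh)
  calc |ξ| = μh * ((1 / μh) * |ξ|) := by field_simp
    _ ≤ μh * |2 * x₀ * ξ + η| := this
end

section
/- For every integer n, one has √(10.5 + 0.1·cos(n+1) + √10.6 + 1.1205) < 8.5 + 0.1·cos(n) − √10.6 − 1.2555, and moreover 8.5 + 0.1·cos(n) − √10.6 − 1.2555 < 1 + √10.6. -/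
/-- The chain of inequalities `x̄₂ < x₂ < R` in the verification of the
nonautonomous Conley–Moser condition A3 for the Hénon map with
`A(n) = 9.5 + 0.1 cos n` and `R = 1 + √10.6`. -/
theorem henon_x_inequalities (n : ℤ) :
    Real.sqrt (10.5 + 0.1 * Real.cos ((n : ℝ) + 1) + Real.sqrt 10.6 + 1.1205)
        < 8.5 + 0.1 * Real.cos n - Real.sqrt 10.6 - 1.2555 ∧
      8.5 + 0.1 * Real.cos n - Real.sqrt 10.6 - 1.2555 < 1 + Real.sqrt 10.6 := by
  have hs : Real.sqrt 10.6 ^ 2 = 10.6 := Real.sq_sqrt (by norm_num)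
  have hs0 : (0:ℝ) ≤ Real.sqrt 10.6 := Real.sqrt_nonneg _
  have hsu : Real.sqrt 10.6 < 3.2558 := by
    nlinarith [hs, hs0]
  have hsl : (3.2557:ℝ) < Real.sqrt 10.6 := by
    nlinarith [hs, hs0]
  have hc1 := Real.neg_one_le_cos ((n : ℝ) + 1)
  have hc2 := Real.cos_le_one ((n : ℝ) + 1)
  have hc3 := Real.neg_one_le_cos ((n : ℝ))
  have hc4 := Real.cos_le_one ((n : ℝ))
  constructor
  · have hpos : (0:ℝ) < 8.5 + 0.1 * Real.cos n - Real.sqrt 10.6 - 1.2555 := by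
      nlinarith
    rw [show ((n:ℤ):ℝ) = (n:ℝ) from rfl] at *
    rw [Real.sqrt_lt' hpos]
    nlinarith
  · nlinarith
end

section
/- For every real number A* with A* ≥ 9.5 and every integer n, one has √(A* + 0.1·cos(n+1) + 1 + √(1 + A* + 0.1·cos(n)) + 1.1205) < A* + 0.1·cos(n) − 1 − √(1 + A* + 0.1·cos(n)) − 1.1205. -/
/-- The inequality `x̄₂ < x₂` for the family of nonautonomous Hénon maps with
`A(n) = A* + 0.1 cos n`, valid for every `A* ≥ 9.5`. -/
theorem henon_x_inequality_family (A : ℝ) (hA : 9.5 ≤ A) (n : ℤ) :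
    Real.sqrt (A + 0.1 * Real.cos ((n : ℝ) + 1) + 1
        + Real.sqrt (1 + A + 0.1 * Real.cos n) + 1.1205)
      < A + 0.1 * Real.cos n - 1 - Real.sqrt (1 + A + 0.1 * Real.cos n) - 1.1205 := by
  set s := Real.sqrt (1 + A + 0.1 * Real.cos n) with hs_def
  have hc0 : -1 ≤ Real.cos (n : ℝ) := Real.neg_one_le_cos _
  have hc0' : Real.cos (n : ℝ) ≤ 1 := Real.cos_le_one _
  have hc1 : -1 ≤ Real.cos ((n : ℝ) + 1) := Real.neg_one_le_cos _
  have hc1' : Real.cos ((n : ℝ) + 1) ≤ 1 := Real.cos_le_one _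
  have hs0 : 0 ≤ s := Real.sqrt_nonneg _
  have harg : (0:ℝ) ≤ 1 + A + 0.1 * Real.cos n := by nlinarith
  have hs2 : s ^ 2 = 1 + A + 0.1 * Real.cos n := Real.sq_sqrt harg
  have hpos : 0 < A + 0.1 * Real.cos n - 1 - s - 1.1205 := by
    nlinarith [sq_nonneg (s - 3.3), sq_nonneg (A - 9.5), sq_nonneg s]
  rw [Real.sqrt_lt' hpos]
  nlinarith [sq_nonneg (s - 3.3), sq_nonneg (A - 9.5), sq_nonneg (s - 3.3 - (A - 9.5)),
    mul_nonneg (sq_nonneg (s - 3.3)) (sub_nonneg.2 hA), sq_nonneg s]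
end
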